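/- In the graded-commutative ring generated over ℤ by degree-1 elements a_1*, b_1*, ..., a_g*, b_g* and a central degree-2 element c*, subject to (a_i*)^2 = (b_i*)^2 = 0, anticommutativity of distinct degree-1 generators, and the Macdonald relation (c*)^{k-1}(a_k* b_k* - c*) = 0 for all k ≤ n: for every n ≤ g, the product a_1* b_1* a_2* b_2* ⋯ a_n* b_n* equals (c*)^n. -/
import Mathlib


/-- In the (graded-commutative) ring generated over ℤ by degree-1
elements `a i`, `b i` (i < g) and a central degree-2 element `c`, subject to
`(a i)^2 = (b i)^2 = 0`, anticommutativity of distinct degree-1 generators, and the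
Macdonald relations `c^k * (a k * b k - c) = 0` for `k < n` (0-indexed version of
`(c*)^{k-1}(a_k* b_k* - c*) = 0` for `k ≤ n`): for every `n ≤ g`, the ordered product
`a 0 * b 0 * a 1 * b 1 * ⋯ * a (n-1) * b (n-1)` equals `c ^ n`. -/
theorem stmt_0 {R : Type*} [Ring R] (g n : ℕ) (hng : n ≤ g)
    (a b : ℕ → R) (c : R)
    (hc : ∀ r : R, c * r = r * c)
    (ha2 : ∀ i, i < g → a i ^ 2 = 0)
    (hb2 : ∀ i, i < g → b i ^ 2 = 0)
    (haa : ∀ i j, i < g → j < g → i ≠ j → a i * a j = -(a j * a i))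
    (hbb : ∀ i j, i < g → j < g → i ≠ j → b i * b j = -(b j * b i))
    (hab : ∀ i j, i < g → j < g → a i * b j = -(b j * a i))
    (hMac : ∀ k, k < n → c ^ k * (a k * b k - c) = 0) :
    ((List.range n).map (fun i => a i * b i)).prod = c ^ n := by
  induction n with
  | zero => simp
  | succ m ih =>
    rw [List.range_succ, List.map_append, List.prod_append,
      ih (le_trans (Nat.le_succ m) hng) (fun k hk => hMac k (Nat.lt_succ_of_lt hk))]
    have h := hMac m (Nat.lt_succ_self m)
    have : c ^ m * (a m * b m) = c ^ m * c := by
      have h2 : c ^ m * (a m * b m) - c ^ m * c = 0 := by rw [← mul_sub]; exact h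
      exact sub_eq_zero.mp h2
    simp [this, pow_succ]
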